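/- Let C be an essentially small triangulated category and S a dense complete full subcategory of C. An object A of C belongs to S if and only if there exist objects S_A and S_0 in S such that A ⊕ S_A ≅ S_0. -/

import Mathlib

/-!
Grothendieck groups of essentially small triangulated categories.

`K0 C` is the quotient of the free abelian group on the isomorphism classes of objects
of `C` by the subgroup generated by the Euler relations `⟨X⟩ - ⟨Y⟩ + ⟨Z⟩` coming from
distinguished triangles `X ⟶ Y ⟶ Z ⟶ X⟦1⟧`; `K0.mk C A` is the class `[A]`.
A full subcategory (identified with its set of objects) is *dense* if every object of `C`
is a direct summand of an object of the subcategory, and *complete* if whenever two of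
the three objects of a distinguished triangle lie in it, so does the third.
-/

open CategoryTheory CategoryTheory.Limits CategoryTheory.Pretriangulated ZeroObject

universe w v u

namespace TriK0

variable (C : Type u) [Category.{v} C] [HasZeroObject C] [Preadditive C] [HasShift C ℤ]
  [∀ n : ℤ, (shiftFunctor C n).Additive] [Pretriangulated C]

/-- The isomorphism class of an object. -/
def isoCl (A : C) : Quotient (isIsomorphicSetoid C) := Quotient.mk (isIsomorphicSetoid C) A

/-- The subgroup of Euler relations coming from distinguished triangles. -/
def K0Rels : AddSubgroup (FreeAbelianGroup (Quotient (isIsomorphicSetoid C))) :=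
  AddSubgroup.closure
    { x | ∃ T : Triangle C, T ∈ (distTriang C) ∧
        x = FreeAbelianGroup.of (isoCl C T.obj₁) - FreeAbelianGroup.of (isoCl C T.obj₂)
          + FreeAbelianGroup.of (isoCl C T.obj₃) }

/-- The Grothendieck group of the triangulated category `C`. -/
def K0 : Type u := FreeAbelianGroup (Quotient (isIsomorphicSetoid C)) ⧸ K0Rels C

noncomputable instance : AddCommGroup (K0 C) :=
  QuotientAddGroup.Quotient.addCommGroup _

/-- The class `[A]` of an object `A` in the Grothendieck group. -/
def K0.mk (A : C) : K0 C := QuotientAddGroup.mk (FreeAbelianGroup.of (isoCl C A))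

/-- A full subcategory is dense if every object of `C` is a direct summand of an object
of the subcategory. -/
noncomputable def DenseSub (S : Set C) : Prop :=
  ∀ A : C, ∃ X ∈ S, ∃ A' : C, Nonempty (X ≅ A ⊞ A')

/-- A full subcategory is complete if, in any distinguished triangle, whenever two of the
three objects belong to the subcategory, so does the third. -/
def CompleteSub (S : Set C) : Prop :=
  ∀ T ∈ (distTriang C),
    (T.obj₁ ∈ S → T.obj₂ ∈ S → T.obj₃ ∈ S) ∧
    (T.obj₁ ∈ S → T.obj₃ ∈ S → T.obj₂ ∈ S) ∧
    (T.obj₂ ∈ S → T.obj₃ ∈ S → T.obj₁ ∈ S)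

end TriK0

open TriK0

/-- For a dense complete full subcategory `S`, an object `A` lies in `S` if and only if
`A ⊕ S_A ≅ S_0` for some objects `S_A, S_0 ∈ S`. -/
theorem mem_iff_biprod_iso
    (C : Type u) [Category.{v} C] [HasZeroObject C] [Preadditive C] [HasShift C ℤ]
    [∀ n : ℤ, (shiftFunctor C n).Additive] [Pretriangulated C] [EssentiallySmall.{w} C]
    (S : Set C) (hdense : DenseSub C S) (hcomplete : CompleteSub C S) (A : C) :
    A ∈ S ↔ ∃ SA ∈ S, ∃ S0 ∈ S, Nonempty ((A ⊞ SA) ≅ S0) := by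
  obtain ⟨X, hX, _, _⟩ := hdense A
  have h0 : (0 : C) ∈ S :=
    (hcomplete (contractibleTriangle X) (contractible_distinguished X)).1 hX hX
  have hiso : ∀ {P Q : C}, (P ≅ Q) → P ∈ S → Q ∈ S := by
    intro P Q e hP
    have hd : Triangle.mk e.hom (0 : Q ⟶ (0 : C)) (0 : (0 : C) ⟶ P⟦(1 : ℤ)⟧) ∈ distTriang C := by
      refine isomorphic_distinguished _ (contractible_distinguished P) _ ?_
      exact Triangle.isoMk _ _ (Iso.refl P) e.symm (Iso.refl 0) (e.hom_inv_id.trans (Category.id_comp _).symm) (zero_comp.trans comp_zero.symm) (zero_comp.trans comp_zero.symm)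
    exact (hcomplete _ hd).2.1 hP h0
  constructor
  · intro hA
    exact ⟨0, h0, A ⊞ (0 : C), hiso (⟨biprod.lift (𝟙 A) 0, biprod.fst, by simp, by aesop_cat⟩ : A ≅ A ⊞ (0 : C)) hA,
      ⟨Iso.refl _⟩⟩
  · rintro ⟨SA, hSA, S0, hS0, ⟨e⟩⟩
    exact (hcomplete _ (binaryBiproductTriangle_distinguished A SA)).2.2
      (hiso e.symm hS0) hSA
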